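/- Heat transfer equation. Let the system A be composed of N subsystems with joint Hilbert space (⊗_{k=1}^N H_{A_k}) ⊗ H_B, H_A = Σ_k H_{A_k} + H_{AI} with each H_{A_k} Hermitian acting on the factor H_{A_k} and H_{AI} Hermitian acting on ⊗_k H_{A_k}, H_B Hermitian acting on H_B, and H_I Hermitian with [H_I, H_A + H_B] = 0; set H = H_A + H_B + H_I. Let ρ be a density matrix whose reduced states on the subsystems are Gibbs: ρ_{A_k} = e^{−β_{A_k}H_{A_k}}/Z_{A_k} and ρ_B = e^{−β_B H_B}/Z_B, let β_A = min_k β_{A_k}, let ρ′ = e^{−iHt}ρe^{iHt}, and let Q = tr[(ρ′ − ρ)H_B]. Then (β_B − β_A)·Q = Σ_{k=1}^N S(ρ′_{A_k}‖ρ_{A_k}) + S(ρ′_B‖ρ_B) + ΔI_{AB} + ΔT_A + ΔJ_A, where ΔI_{AB} = I(ρ′) − I(ρ) with the multipartite mutual information I(ϱ) = Σ_k S(ϱ_{A_k}) + S(ϱ_B) − S(ϱ), ΔT_A = Σ_k (β_A − β_{A_k}) tr[(ρ′ − ρ)H_{A_k}], and ΔJ_A = β_A tr[(ρ′ − ρ)H_{AI}].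 -/

import Mathlib

open Matrix Kronecker Complex
open scoped ComplexOrder

noncomputable section

/-- Matrix logarithm of a Hermitian matrix via its spectral decomposition, with the
convention `log 0 = 0` on the spectrum (junk value `0` on non-Hermitian matrices). -/
def mlog {n : Type*} [Fintype n] [DecidableEq n] (A : Matrix n n ℂ) : Matrix n n ℂ :=
  if h : A.IsHermitian then
    (h.eigenvectorUnitary : Matrix n n ℂ) *
      Matrix.diagonal (fun i => (Real.log (h.eigenvalues i) : ℂ)) *
      (h.eigenvectorUnitary : Matrix n n ℂ)ᴴ
  else 0

/-- Von Neumann entropy `S(ρ) = -tr(ρ log ρ)` (with the convention `0 log 0 = 0`). -/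
def vN {n : Type*} [Fintype n] [DecidableEq n] (ρ : Matrix n n ℂ) : ℂ :=
  -(ρ * mlog ρ).trace

/-- Quantum relative entropy `S(ρ‖σ) = tr(ρ log ρ) - tr(ρ log σ)`. -/
def relEnt {n : Type*} [Fintype n] [DecidableEq n] (ρ σ : Matrix n n ℂ) : ℂ :=
  (ρ * mlog ρ).trace - (ρ * mlog σ).trace

/-- The Gibbs state `e^{-βH}/tr(e^{-βH})` of a Hamiltonian `H` at inverse temperature `β`. -/
def gibbs {n : Type*} [Fintype n] [DecidableEq n] (β : ℝ) (H : Matrix n n ℂ) :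
    Matrix n n ℂ :=
  (NormedSpace.exp ((-β : ℂ) • H)).trace⁻¹ • NormedSpace.exp ((-β : ℂ) • H)

/-- Unitary (Schrödinger) evolution `ρ(t) = e^{-iHt} ρ e^{iHt}` (with `ħ = 1`). -/
def evolve {n : Type*} [Fintype n] [DecidableEq n] (H ρ : Matrix n n ℂ) (t : ℝ) :
    Matrix n n ℂ :=
  NormedSpace.exp ((-(I * t)) • H) * ρ * NormedSpace.exp ((I * t) • H)

/-- Reduced density matrix on the first factor (partial trace over the second). -/
def redA {m n : Type*} [Fintype m] [Fintype n]
    (ρ : Matrix (m × n) (m × n) ℂ) : Matrix m m ℂ :=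
  Matrix.of fun i j => ∑ k, ρ (i, k) (j, k)

/-- Reduced density matrix on the second factor (partial trace over the first). -/
def redB {m n : Type*} [Fintype m] [Fintype n]
    (ρ : Matrix (m × n) (m × n) ℂ) : Matrix n n ℂ :=
  Matrix.of fun i j => ∑ k, ρ (k, i) (k, j)

/-- Bipartite mutual information `I_{A:B}(ϱ) = S(ϱ_A) + S(ϱ_B) - S(ϱ)`. -/
def mutInfo {m n : Type*} [Fintype m] [DecidableEq m] [Fintype n] [DecidableEq n]
    (ρ : Matrix (m × n) (m × n) ℂ) : ℂ :=
  vN (redA ρ) + vN (redB ρ) - vN ρ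


section AuxGeneral

variable {n : Type*} [Fintype n] [DecidableEq n]

lemma mlog_eq_cfc {A : Matrix n n ℂ} (hA : A.IsHermitian) :
    mlog A = cfc Real.log A := by
  rw [mlog, dif_pos hA, hA.cfc_eq, Matrix.IsHermitian.cfc]
  rfl

lemma contOn (f : ℝ → ℝ) (A : Matrix n n ℂ) : ContinuousOn f (spectrum ℝ A) :=
  (Matrix.finite_real_spectrum (A := A)).continuousOn f

lemma exp_smul_eq_cfc (c : ℝ) {A : Matrix n n ℂ} (hA : A.IsHermitian) :
    NormedSpace.exp ((c:ℂ) • A) = cfc (fun x => Real.exp (c * x)) A := by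
  rw [hA.cfc_eq, Matrix.IsHermitian.cfc, Unitary.conjStarAlgAut_apply]
  have hu : IsUnit (hA.eigenvectorUnitary : Matrix n n ℂ) :=
    (Unitary.toUnits hA.eigenvectorUnitary).isUnit
  have key : (c:ℂ) • A = (hA.eigenvectorUnitary : Matrix n n ℂ) *
      ((c:ℂ) • Matrix.diagonal (RCLike.ofReal ∘ hA.eigenvalues)) *
      star (hA.eigenvectorUnitary : Matrix n n ℂ) := by
    rw [mul_smul_comm, smul_mul_assoc]; congr 1; exact hA.spectral_theorem
  have hsi : star (hA.eigenvectorUnitary : Matrix n n ℂ) =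
      (hA.eigenvectorUnitary : Matrix n n ℂ)⁻¹ :=
    (Matrix.inv_eq_left_inv (Matrix.mem_unitaryGroup_iff'.mp hA.eigenvectorUnitary.2)).symm
  rw [key, hsi, Matrix.exp_conj _ _ hu, ← Matrix.diagonal_smul, Matrix.exp_diagonal, ← hsi]
  congr 2
  funext i
  simp [Pi.exp_def, ← Complex.exp_eq_exp_ℂ, Complex.ofReal_exp, Complex.real_smul]
  funext j
  by_cases h : i = j <;> simp [Matrix.diagonal_apply, h, Complex.ofReal_exp]

lemma trace_cfc' {A : Matrix n n ℂ} (hA : A.IsHermitian) (f : ℝ → ℝ) :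
    (cfc f A).trace = ∑ i, (f (hA.eigenvalues i) : ℂ) := by
  rw [hA.cfc_eq, Matrix.IsHermitian.cfc, Unitary.conjStarAlgAut_apply, Matrix.trace_mul_cycle,
    Matrix.mem_unitaryGroup_iff'.mp hA.eigenvectorUnitary.2, Matrix.one_mul,
    Matrix.trace_diagonal]
  rfl

lemma isHermitian_cfc {A : Matrix n n ℂ} (hA : A.IsHermitian) (f : ℝ → ℝ) :
    (cfc f A).IsHermitian := by
  have : IsSelfAdjoint A := hA
  exact cfc_predicate f A

lemma gibbs_eq_cfc [Nonempty n] (β : ℝ) {H : Matrix n n ℂ} (hH : H.IsHermitian) :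
    ∃ Z : ℝ, 0 < Z ∧ gibbs β H = cfc (fun x => Z⁻¹ * Real.exp (-β * x)) H := by
  refine ⟨∑ i, Real.exp (-β * hH.eigenvalues i), Finset.sum_pos (fun i _ => Real.exp_pos _)
    Finset.univ_nonempty, ?_⟩
  have h1 : NormedSpace.exp ((-β : ℂ) • H) = cfc (fun x => Real.exp (-β * x)) H := by
    rw [← exp_smul_eq_cfc (-β) hH]; norm_num
  rw [gibbs, h1, trace_cfc' hH,
    cfc_const_mul ((∑ i, Real.exp (-β * hH.eigenvalues i))⁻¹) (fun x => Real.exp (-β * x)) H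
      (contOn _ _)]
  have h2 : ((∑ i : n, ((Real.exp (-β * hH.eigenvalues i) : ℝ) : ℂ))⁻¹)
      = (((∑ i, Real.exp (-β * hH.eigenvalues i))⁻¹ : ℝ) : ℂ) := by push_cast; rfl
  rw [h2, Complex.coe_smul]

lemma mlog_gibbs [Nonempty n] (β : ℝ) {H : Matrix n n ℂ} (hH : H.IsHermitian) :
    ∃ c : ℝ, mlog (gibbs β H) = (-β : ℂ) • H + (c : ℂ) • 1 := by
  obtain ⟨Z, hZ, hg⟩ := gibbs_eq_cfc β hH
  refine ⟨-Real.log Z, ?_⟩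
  have hsa : (gibbs β H).IsHermitian := hg ▸ (isHermitian_cfc hH _)
  have hcomp : cfc (Real.log ∘ fun x => Z⁻¹ * Real.exp (-β * x)) H
      = cfc Real.log (cfc (fun x => Z⁻¹ * Real.exp (-β * x)) H) :=
    cfc_comp Real.log (fun x => Z⁻¹ * Real.exp (-β * x)) H hH.isSelfAdjoint
      (((Matrix.finite_real_spectrum (A := H)).image _).continuousOn Real.log) (contOn _ _)
  rw [mlog_eq_cfc hsa, hg, ← hcomp]
  have hfun : (Real.log ∘ fun x => Z⁻¹ * Real.exp (-β * x))
      = fun x => (-β) * x + (-Real.log Z) := by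
    funext x
    simp only [Function.comp_apply]
    rw [Real.log_mul (by positivity) (Real.exp_ne_zero _), Real.log_inv, Real.log_exp]
    ring
  rw [hfun, cfc_add (f := fun x => -β * x) (g := fun _ => -Real.log Z) (a := H)
      (contOn _ _) (contOn _ _), cfc_const_mul_id (-β) H hH.isSelfAdjoint,
    cfc_const (-Real.log Z) H hH.isSelfAdjoint, Algebra.algebraMap_eq_smul_one,
    ← Complex.coe_smul, ← Complex.coe_smul]
  push_cast
  rfl

/-- Conjugation by a unitary as a star algebra homomorphism. -/
def conjSAH (U : Matrix n n ℂ) (hU : U ∈ unitary (Matrix n n ℂ)) :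
    Matrix n n ℂ →⋆ₐ[ℂ] Matrix n n ℂ where
  toFun x := U * x * star U
  map_one' := by
    show U * 1 * star U = 1
    rw [Matrix.mul_one]; exact (Unitary.mem_iff.mp hU).2
  map_mul' x y := by
    have h1 : star U * U = 1 := (Unitary.mem_iff.mp hU).1
    calc U * (x * y) * star U = U * x * (star U * U) * y * star U := by
          rw [h1]; noncomm_ring
      _ = U * x * star U * (U * y * star U) := by noncomm_ring
  map_zero' := by simp
  map_add' x y := by noncomm_ring
  commutes' c := by
    simp only [Algebra.algebraMap_eq_smul_one]
    rw [Matrix.mul_smul, Matrix.mul_one, Matrix.smul_mul, (Unitary.mem_iff.mp hU).2]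
  map_star' x := by
    simp only [Matrix.star_eq_conjTranspose, Matrix.conjTranspose_mul,
      Matrix.conjTranspose_conjTranspose, Matrix.mul_assoc]

lemma conjSAH_continuous (U : Matrix n n ℂ) (hU : U ∈ unitary (Matrix n n ℂ)) :
    Continuous (conjSAH U hU) := by
  show Continuous fun x => U * x * star U
  fun_prop

lemma mlog_conj {U A : Matrix n n ℂ} (hU : U ∈ unitary (Matrix n n ℂ))
    (hA : A.IsHermitian) : mlog (U * A * star U) = U * mlog A * star U := by
  have hconj : (U * A * star U).IsHermitian := by
    have := hA
    unfold Matrix.IsHermitian at *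
    simp only [Matrix.conjTranspose_mul, Matrix.conjTranspose_conjTranspose,
      Matrix.star_eq_conjTranspose, Matrix.mul_assoc]
    rw [this]
  have key := StarAlgHomClass.map_cfc (conjSAH U hU) Real.log A (contOn _ _)
    (conjSAH_continuous U hU) hA.isSelfAdjoint hconj.isSelfAdjoint
  rw [mlog_eq_cfc hconj, mlog_eq_cfc hA]
  exact (key.symm : _)

lemma vN_conj {U A : Matrix n n ℂ} (hU : U ∈ unitary (Matrix n n ℂ))
    (hA : A.IsHermitian) : vN (U * A * star U) = vN A := by
  have h1 : star U * U = 1 := (Unitary.mem_iff.mp hU).1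
  rw [vN, vN, mlog_conj hU hA]
  congr 1
  have h2 : U * A * star U * (U * mlog A * star U) = U * (A * mlog A) * star U := by
    calc U * A * star U * (U * mlog A * star U)
        = U * A * (star U * U) * mlog A * star U := by noncomm_ring
      _ = U * (A * mlog A) * star U := by rw [h1]; noncomm_ring
  rw [h2, Matrix.trace_mul_comm, ← Matrix.mul_assoc, h1, Matrix.one_mul]

lemma trace_conj_unitary {U : Matrix n n ℂ} (A : Matrix n n ℂ)
    (hU : U ∈ unitary (Matrix n n ℂ)) : (U * A * star U).trace = A.trace := by
  rw [Matrix.trace_mul_comm, ← Matrix.mul_assoc, (Unitary.mem_iff.mp hU).1, Matrix.one_mul]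

lemma trace_mul_affine (σ X : Matrix n n ℂ) (b c : ℂ) (hσ : σ.trace = 1) :
    (σ * (b • X + c • 1)).trace = b * (σ * X).trace + c := by
  rw [Matrix.mul_add, Matrix.trace_add, Matrix.mul_smul, Matrix.trace_smul, Matrix.mul_smul,
    Matrix.mul_one, Matrix.trace_smul, hσ]
  simp [smul_eq_mul]

lemma star_exp_smul {H : Matrix n n ℂ} (hH : H.IsHermitian) (c : ℂ) :
    star (NormedSpace.exp (c • H)) = NormedSpace.exp (star c • H) := by
  rw [Matrix.star_eq_conjTranspose, ← Matrix.exp_conjTranspose, Matrix.conjTranspose_smul, hH]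

lemma exp_smul_mul_exp_neg_smul (c : ℂ) (A : Matrix n n ℂ) :
    NormedSpace.exp (c • A) * NormedSpace.exp ((-c) • A) = 1 := by
  rw [← Matrix.exp_add_of_commute _ _ (((Commute.refl A).smul_left c).smul_right (-c)),
    ← add_smul]
  simp [NormedSpace.exp_zero]

lemma exp_mem_unitary {H : Matrix n n ℂ} (hH : H.IsHermitian) (t : ℝ) :
    NormedSpace.exp ((-(Complex.I * (t:ℝ))) • H) ∈ unitary (Matrix n n ℂ) := by
  have hs : star (NormedSpace.exp ((-(Complex.I * (t:ℝ))) • H))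
      = NormedSpace.exp ((Complex.I * (t:ℝ)) • H) := by
    rw [star_exp_smul hH]
    congr 1
    simp [Complex.ext_iff]
  rw [Unitary.mem_iff]
  constructor
  · rw [hs]
    exact exp_smul_mul_exp_neg_smul (Complex.I * (t:ℝ)) H
  · rw [hs]
    simpa using exp_smul_mul_exp_neg_smul (-(Complex.I * (t:ℝ))) H

lemma commute_exp {A B : Matrix n n ℂ} (h : Commute A B) :
    Commute (NormedSpace.exp A) B := by
  letI : SeminormedRing (Matrix n n ℂ) := Matrix.linftyOpSemiNormedRing
  letI : NormedRing (Matrix n n ℂ) := Matrix.linftyOpNormedRing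
  letI : NormedAlgebra ℂ (Matrix n n ℂ) := Matrix.linftyOpNormedAlgebra
  exact h.exp_left

end AuxGeneral

section Multipartite

variable {N : ℕ} {α : Fin N → Type*} [∀ k, Fintype (α k)] [∀ k, DecidableEq (α k)]
  {τ : Type*} [Fintype τ] [DecidableEq τ]

/-- Embedding of an operator on the subsystem `A_k` into the joint space
`(⊗_k H_{A_k}) ⊗ H_B` (identity on all other factors). -/
def embAk (k : Fin N) (M : Matrix (α k) (α k) ℂ) :
    Matrix ((∀ j, α j) × τ) ((∀ j, α j) × τ) ℂ :=
  Matrix.of fun p q =>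
    M (p.1 k) (q.1 k) *
      (if (∀ j, j ≠ k → p.1 j = q.1 j) ∧ p.2 = q.2 then 1 else 0)

/-- Embedding of an operator on the whole `A` system `⊗_k H_{A_k}` into the joint space. -/
def embA (M : Matrix (∀ j, α j) (∀ j, α j) ℂ) :
    Matrix ((∀ j, α j) × τ) ((∀ j, α j) × τ) ℂ :=
  Matrix.of fun p q => M p.1 q.1 * (if p.2 = q.2 then 1 else 0)

/-- Embedding of an operator on the `B` system into the joint space. -/
def embB (M : Matrix τ τ ℂ) :
    Matrix ((∀ j, α j) × τ) ((∀ j, α j) × τ) ℂ :=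
  Matrix.of fun p q => M p.2 q.2 * (if p.1 = q.1 then 1 else 0)

/-- Reduced density matrix on the subsystem `A_k` (partial trace over everything else). -/
def rdmAk (k : Fin N) (ρ : Matrix ((∀ j, α j) × τ) ((∀ j, α j) × τ) ℂ) :
    Matrix (α k) (α k) ℂ :=
  Matrix.of fun a b => ∑ g : ∀ j, α j, ∑ y : τ,
    if g k = a then ρ (g, y) (Function.update g k b, y) else 0

/-- Reduced density matrix on the `B` system (partial trace over all `A` subsystems). -/
def rdmB (ρ : Matrix ((∀ j, α j) × τ) ((∀ j, α j) × τ) ℂ) : Matrix τ τ ℂ :=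
  Matrix.of fun x y => ∑ g : ∀ j, α j, ρ (g, x) (g, y)

/-- Multipartite mutual information `I(ϱ) = Σ_k S(ϱ_{A_k}) + S(ϱ_B) - S(ϱ)` among the
subsystems `A_1, …, A_N, B`. -/
def multiMutInfo (ρ : Matrix ((∀ j, α j) × τ) ((∀ j, α j) × τ) ℂ) : ℂ :=
  (∑ k, vN (rdmAk k ρ)) + vN (rdmB ρ) - vN ρ

lemma sum_cond_update (k : Fin N) (g : ∀ j, α j) (F : (∀ j, α j) → ℂ) :
    ∑ h : ∀ j, α j, (if ∀ j, j ≠ k → h j = g j then F h else 0)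
      = ∑ b : α k, F (Function.update g k b) := by
  rw [← Finset.sum_filter]
  refine Finset.sum_nbij' (fun h => h k) (fun b => Function.update g k b) ?_ ?_ ?_ ?_ ?_
  · intro h hh; exact Finset.mem_univ _
  · intro b hb
    simp only [Finset.mem_filter, Finset.mem_univ, true_and]
    intro j hj; exact Function.update_of_ne hj _ _
  · intro h hh
    simp only [Finset.mem_filter, Finset.mem_univ, true_and] at hh
    funext j
    by_cases hj : j = k
    · subst hj; simp
    · simp only [Function.update_of_ne hj]; exact (hh j hj).symm
  · intro b hb; simp
  · intro h hh
    simp only [Finset.mem_filter, Finset.mem_univ, true_and] at hh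
    congr 1
    funext j
    by_cases hj : j = k
    · subst hj; simp
    · simp only [Function.update_of_ne hj]; exact hh j hj

lemma trace_rdmAk_mul (k : Fin N) (σ : Matrix ((∀ j, α j) × τ) ((∀ j, α j) × τ) ℂ)
    (M : Matrix (α k) (α k) ℂ) :
    (rdmAk k σ * M).trace = (σ * embAk k M).trace := by
  classical
  have hL : (rdmAk k σ * M).trace
      = ∑ b : α k, ∑ g : ∀ j, α j, ∑ y : τ,
          σ (g, y) (Function.update g k b, y) * M b (g k) := by
    simp only [Matrix.trace, Matrix.diag, Matrix.mul_apply, rdmAk, Matrix.of_apply,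
      Finset.sum_mul, ite_mul, zero_mul]
    rw [Finset.sum_comm]
    refine Finset.sum_congr rfl fun b _ => ?_
    rw [Finset.sum_comm]
    refine Finset.sum_congr rfl fun g _ => ?_
    rw [Finset.sum_comm]
    refine Finset.sum_congr rfl fun y _ => ?_
    simp [Finset.sum_ite_eq]
  have hR : (σ * embAk k M).trace
      = ∑ b : α k, ∑ g : ∀ j, α j, ∑ y : τ,
          σ (g, y) (Function.update g k b, y) * M b (g k) := by
    simp only [Matrix.trace, Matrix.diag, Matrix.mul_apply, embAk, Matrix.of_apply,
      Fintype.sum_prod_type, mul_ite, mul_one, mul_zero, ite_and]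
    calc ∑ g : ∀ j, α j, ∑ y : τ, ∑ h : ∀ j, α j, ∑ z : τ,
            (if ∀ j, j ≠ k → h j = g j then if z = y then
              σ (g, y) (h, z) * M (h k) (g k) else 0 else 0)
        = ∑ g : ∀ j, α j, ∑ y : τ, ∑ h : ∀ j, α j,
            (if ∀ j, j ≠ k → h j = g j then σ (g, y) (h, y) * M (h k) (g k) else 0) := by
          refine Finset.sum_congr rfl fun g _ => Finset.sum_congr rfl fun y _ =>
            Finset.sum_congr rfl fun h _ => ?_
          by_cases hc : ∀ j, j ≠ k → h j = g j <;> simp [hc, Finset.sum_ite_eq']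
      _ = ∑ g : ∀ j, α j, ∑ y : τ, ∑ b : α k,
            σ (g, y) (Function.update g k b, y) * M b (g k) := by
          refine Finset.sum_congr rfl fun g _ => Finset.sum_congr rfl fun y _ => ?_
          rw [sum_cond_update k g (fun h => σ (g, y) (h, y) * M (h k) (g k))]
          simp
      _ = ∑ b : α k, ∑ g : ∀ j, α j, ∑ y : τ,
            σ (g, y) (Function.update g k b, y) * M b (g k) := by
          rw [show (∑ g : ∀ j, α j, ∑ y : τ, ∑ b : α k,
              σ (g, y) (Function.update g k b, y) * M b (g k))
              = ∑ g : ∀ j, α j, ∑ b : α k, ∑ y : τ,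
              σ (g, y) (Function.update g k b, y) * M b (g k) from
            Finset.sum_congr rfl fun g _ => Finset.sum_comm, Finset.sum_comm]
  rw [hL, hR]

lemma trace_rdmB_mul (σ : Matrix ((∀ j, α j) × τ) ((∀ j, α j) × τ) ℂ) (M : Matrix τ τ ℂ) :
    (rdmB σ * M).trace = (σ * embB (α := α) M).trace := by
  classical
  simp only [Matrix.trace, Matrix.diag, Matrix.mul_apply, rdmB, embB, Matrix.of_apply,
    Fintype.sum_prod_type, Finset.sum_mul, mul_ite, mul_one, mul_zero]
  calc ∑ x : τ, ∑ y : τ, ∑ g : ∀ j, α j, σ (g, x) (g, y) * M y x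
      = ∑ x : τ, ∑ g : ∀ j, α j, ∑ y : τ, σ (g, x) (g, y) * M y x := by
        exact Finset.sum_congr rfl fun x _ => Finset.sum_comm
    _ = ∑ g : ∀ j, α j, ∑ x : τ, ∑ y : τ, σ (g, x) (g, y) * M y x := Finset.sum_comm
    _ = ∑ g : ∀ j, α j, ∑ x : τ, ∑ h : ∀ j, α j, ∑ y : τ,
          (if h = g then σ (g, x) (h, y) * M y x else 0) := by
        refine Finset.sum_congr rfl fun g _ => Finset.sum_congr rfl fun x _ => ?_
        symm
        calc ∑ h : ∀ j, α j, ∑ y : τ, (if h = g then σ (g, x) (h, y) * M y x else 0)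
            = ∑ h : ∀ j, α j, (if h = g then ∑ y : τ, σ (g, x) (h, y) * M y x else 0) := by
              refine Finset.sum_congr rfl fun h _ => ?_
              by_cases hh : h = g <;> simp [hh]
          _ = ∑ y : τ, σ (g, x) (g, y) * M y x := by
              rw [Finset.sum_ite_eq' Finset.univ g]; simp
    _ = _ := rfl

lemma trace_rdmAk_eq (k : Fin N) (σ : Matrix ((∀ j, α j) × τ) ((∀ j, α j) × τ) ℂ) :
    (rdmAk k σ).trace = σ.trace := by
  classical
  simp only [Matrix.trace, Matrix.diag, rdmAk, Matrix.of_apply, Fintype.sum_prod_type]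
  calc ∑ a : α k, ∑ g : ∀ j, α j, ∑ y : τ,
        (if g k = a then σ (g, y) (Function.update g k a, y) else 0)
      = ∑ g : ∀ j, α j, ∑ a : α k, ∑ y : τ,
        (if g k = a then σ (g, y) (Function.update g k a, y) else 0) := Finset.sum_comm
    _ = ∑ g : ∀ j, α j, ∑ y : τ, σ (g, y) (g, y) := by
        refine Finset.sum_congr rfl fun g _ => ?_
        calc ∑ a : α k, ∑ y : τ, (if g k = a then σ (g, y) (Function.update g k a, y) else 0)
            = ∑ a : α k, (if g k = a then ∑ y : τ, σ (g, y) (Function.update g k a, y)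
                else 0) := by
              refine Finset.sum_congr rfl fun a _ => ?_
              by_cases hh : g k = a <;> simp [hh]
          _ = ∑ y : τ, σ (g, y) (Function.update g k (g k), y) := by
              rw [Finset.sum_ite_eq Finset.univ (g k)]; simp
          _ = ∑ y : τ, σ (g, y) (g, y) := by rw [Function.update_eq_self]
    _ = _ := rfl

lemma trace_rdmB_eq (σ : Matrix ((∀ j, α j) × τ) ((∀ j, α j) × τ) ℂ) :
    (rdmB σ).trace = σ.trace := by
  simp only [Matrix.trace, Matrix.diag, rdmB, Matrix.of_apply, Fintype.sum_prod_type]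
  exact Finset.sum_comm


lemma isHermitian_embAk (k : Fin N) {M : Matrix (α k) (α k) ℂ} (hM : M.IsHermitian) :
    (embAk (τ := τ) k M).IsHermitian := by
  ext p q
  simp only [Matrix.conjTranspose_apply, embAk, Matrix.of_apply]
  by_cases hc : (∀ j, j ≠ k → p.1 j = q.1 j) ∧ p.2 = q.2
  · have hc' : (∀ j, j ≠ k → q.1 j = p.1 j) ∧ q.2 = p.2 :=
      ⟨fun j hj => (hc.1 j hj).symm, hc.2.symm⟩
    rw [if_pos hc', if_pos hc, mul_one, mul_one]
    have h3 : Mᴴ (p.1 k) (q.1 k) = M (p.1 k) (q.1 k) := by rw [hM]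
    rw [← h3, Matrix.conjTranspose_apply]
  · have hc' : ¬((∀ j, j ≠ k → q.1 j = p.1 j) ∧ q.2 = p.2) := fun h =>
      hc ⟨fun j hj => (h.1 j hj).symm, h.2.symm⟩
    rw [if_neg hc', if_neg hc, mul_zero, mul_zero, star_zero]

lemma isHermitian_embA {M : Matrix (∀ j, α j) (∀ j, α j) ℂ} (hM : M.IsHermitian) :
    (embA (τ := τ) M).IsHermitian := by
  ext p q
  simp only [Matrix.conjTranspose_apply, embA, Matrix.of_apply]
  by_cases hc : p.2 = q.2
  · rw [if_pos hc.symm, if_pos hc, mul_one, mul_one]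
    have h3 : Mᴴ p.1 q.1 = M p.1 q.1 := by rw [hM]
    rw [← h3, Matrix.conjTranspose_apply]
  · have hc' : ¬(q.2 = p.2) := fun h => hc h.symm
    rw [if_neg hc', if_neg hc, mul_zero, mul_zero, star_zero]

lemma isHermitian_embB {M : Matrix τ τ ℂ} (hM : M.IsHermitian) :
    (embB (α := α) M).IsHermitian := by
  ext p q
  simp only [Matrix.conjTranspose_apply, embB, Matrix.of_apply]
  by_cases hc : p.1 = q.1
  · rw [if_pos hc.symm, if_pos hc, mul_one, mul_one]
    have h3 : Mᴴ p.2 q.2 = M p.2 q.2 := by rw [hM]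
    rw [← h3, Matrix.conjTranspose_apply]
  · have hc' : ¬(q.1 = p.1) := fun h => hc h.symm
    rw [if_neg hc', if_neg hc, mul_zero, mul_zero, star_zero]


/-- **heat transfer equation, Eq. (5).** With `A` composed of `N` subsystems,
`H_A = Σ_k H_{A_k} + H_{AI}`, the heat-transfer condition `[H_I, H_A + H_B] = 0`, an initial
state `ρ` whose reduced states on every `A_k` and on `B` are Gibbs at inverse temperatures
`β_{A_k}`, `β_B`, and `β_A = min_k β_{A_k}`, the heat transfer `Q = tr[(ρ' - ρ)H_B]`,
`ρ' = e^{-iHt} ρ e^{iHt}`, satisfies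
`(β_B - β_A)Q = Σ_k S(ρ'_{A_k}‖ρ_{A_k}) + S(ρ'_B‖ρ_B) + ΔI_{AB} + ΔT_A + ΔJ_A`. -/
theorem heat_transfer_equation
    (HAk : ∀ k : Fin N, Matrix (α k) (α k) ℂ) (hHAk : ∀ k, (HAk k).IsHermitian)
    (HAI : Matrix (∀ j, α j) (∀ j, α j) ℂ) (hHAI : HAI.IsHermitian)
    (HB : Matrix τ τ ℂ) (hHB : HB.IsHermitian)
    (HI : Matrix ((∀ j, α j) × τ) ((∀ j, α j) × τ) ℂ) (hHI : HI.IsHermitian)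
    (HA : Matrix ((∀ j, α j) × τ) ((∀ j, α j) × τ) ℂ)
    (hHA : HA = (∑ k, embAk k (HAk k)) + embA HAI)
    (hcomm : ⁅HI, HA + embB HB⁆ = 0)
    (H : Matrix ((∀ j, α j) × τ) ((∀ j, α j) × τ) ℂ) (hH : H = HA + embB HB + HI)
    (ρ : Matrix ((∀ j, α j) × τ) ((∀ j, α j) × τ) ℂ)
    (hρ : ρ.PosSemidef) (hρtr : ρ.trace = 1)
    (βAk : Fin N → ℝ) (βB : ℝ)
    (hGibbsA : ∀ k, rdmAk k ρ = gibbs (βAk k) (HAk k))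
    (hGibbsB : rdmB ρ = gibbs βB HB)
    (βA : ℝ) (hβA_le : ∀ k, βA ≤ βAk k) (hβA_mem : ∃ k, βAk k = βA)
    (t : ℝ) (ρ' : Matrix ((∀ j, α j) × τ) ((∀ j, α j) × τ) ℂ) (hρ' : ρ' = evolve H ρ t)
    (Q : ℂ) (hQ : Q = ((ρ' - ρ) * embB HB).trace) :
    ((βB - βA : ℝ) : ℂ) * Q
      = (∑ k, relEnt (rdmAk k ρ') (rdmAk k ρ))
        + relEnt (rdmB ρ') (rdmB ρ)
        + (multiMutInfo ρ' - multiMutInfo ρ)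
        + (∑ k, ((βA - βAk k : ℝ) : ℂ) * ((ρ' - ρ) * embAk k (HAk k)).trace)
        + (βA : ℂ) * ((ρ' - ρ) * embA HAI).trace := by
  classical
  have hNE : Nonempty ((∀ j, α j) × τ) := by
    by_contra hcon
    rw [not_nonempty_iff] at hcon
    rw [Matrix.trace, Finset.univ_eq_empty, Finset.sum_empty] at hρtr
    exact one_ne_zero hρtr.symm
  haveI := hNE
  have hNEα : ∀ k, Nonempty (α k) := fun k => ⟨(Classical.arbitrary ((∀ j, α j) × τ)).1 k⟩
  haveI : Nonempty τ := ⟨(Classical.arbitrary ((∀ j, α j) × τ)).2⟩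
  -- Hermitian structure
  have hermSum : (∑ k, embAk k (HAk k) :
      Matrix ((∀ j, α j) × τ) ((∀ j, α j) × τ) ℂ).IsHermitian := by
    unfold Matrix.IsHermitian
    rw [Matrix.conjTranspose_sum]
    exact Finset.sum_congr rfl fun k _ => isHermitian_embAk k (hHAk k)
  have hermHA : HA.IsHermitian := by
    rw [hHA]; exact hermSum.add (isHermitian_embA hHAI)
  have hermH : H.IsHermitian := by
    rw [hH]; exact (hermHA.add (isHermitian_embB hHB)).add hHI
  -- unitary evolution
  set u : Matrix ((∀ j, α j) × τ) ((∀ j, α j) × τ) ℂ :=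
    NormedSpace.exp ((-(I * (t:ℝ))) • H) with hu_def
  have hu : u ∈ unitary (Matrix ((∀ j, α j) × τ) ((∀ j, α j) × τ) ℂ) :=
    exp_mem_unitary hermH t
  have hsu : star u = NormedSpace.exp ((I * (t:ℝ)) • H) := by
    rw [hu_def, star_exp_smul hermH]
    congr 1
    simp [Complex.ext_iff]
  have hρ'c : ρ' = u * ρ * star u := by
    rw [hρ', evolve, hsu]
  -- Gibbs logs
  have hmlogA : ∀ k, ∃ c : ℝ,
      mlog (rdmAk k ρ) = (-(βAk k) : ℂ) • HAk k + (c : ℂ) • 1 := by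
    intro k
    haveI := hNEα k
    rw [hGibbsA k]
    exact mlog_gibbs (βAk k) (hHAk k)
  choose cA hcA using hmlogA
  obtain ⟨cB, hcB⟩ : ∃ c : ℝ, mlog (rdmB ρ) = (-(βB) : ℂ) • HB + (c : ℂ) • 1 := by
    rw [hGibbsB]
    exact mlog_gibbs βB hHB
  -- traces
  have htr' : ρ'.trace = 1 := by rw [hρ'c, trace_conj_unitary ρ hu, hρtr]
  have htrAk : ∀ k, (rdmAk k ρ).trace = 1 := fun k => (trace_rdmAk_eq k ρ).trans hρtr
  have htrAk' : ∀ k, (rdmAk k ρ').trace = 1 := fun k => (trace_rdmAk_eq k ρ').trans htr'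
  have htrB : (rdmB ρ).trace = 1 := (trace_rdmB_eq ρ).trans hρtr
  have htrB' : (rdmB ρ').trace = 1 := (trace_rdmB_eq ρ').trans htr'
  have hvN : vN ρ' = vN ρ := by rw [hρ'c]; exact vN_conj hu hρ.1
  -- energy conservation
  have hcomK : Commute H (HA + embB HB) := by
    have h0 : ⁅H, HA + embB HB⁆ = 0 := by
      have hc := hcomm
      rw [Ring.lie_def] at hc
      rw [hH, Ring.lie_def, add_mul (HA + embB HB) HI (HA + embB HB),
        mul_add (HA + embB HB) (HA + embB HB) HI, add_sub_add_comm, sub_self, zero_add]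
      exact hc
    rw [Ring.lie_def, sub_eq_zero] at h0
    exact h0
  have hcomsu : Commute (star u) (HA + embB HB) := by
    rw [hsu]; exact commute_exp (hcomK.smul_left _)
  have hEC : ((ρ' - ρ) * (HA + embB HB)).trace = 0 := by
    have h1 : (ρ' * (HA + embB HB)).trace = (ρ * (HA + embB HB)).trace := by
      calc (ρ' * (HA + embB HB)).trace
          = (u * (ρ * (HA + embB HB)) * star u).trace := by
            rw [hρ'c, Matrix.mul_assoc (u * ρ), hcomsu.eq, ← Matrix.mul_assoc,
              Matrix.mul_assoc u]
        _ = (ρ * (HA + embB HB)).trace := trace_conj_unitary _ hu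
    rw [Matrix.sub_mul, Matrix.trace_sub, h1, sub_self]
  have hsplit : (∑ k, ((ρ' - ρ) * embAk k (HAk k)).trace)
      + ((ρ' - ρ) * embA HAI).trace + Q = 0 := by
    rw [hQ, ← hEC, hHA, Matrix.mul_add, Matrix.mul_add, Matrix.trace_add,
      Matrix.trace_add, Finset.mul_sum, Matrix.trace_sum]
  -- reduced energies
  have hEk : ∀ k, ((ρ' - ρ) * embAk k (HAk k)).trace
      = (rdmAk k ρ' * HAk k).trace - (rdmAk k ρ * HAk k).trace := fun k => by
    rw [Matrix.sub_mul, Matrix.trace_sub, trace_rdmAk_mul, trace_rdmAk_mul]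
  have hQB : Q = (rdmB ρ' * HB).trace - (rdmB ρ * HB).trace := by
    rw [hQ, Matrix.sub_mul, Matrix.trace_sub, trace_rdmB_mul, trace_rdmB_mul]
  -- entropy identities
  have hRA : ∀ k, relEnt (rdmAk k ρ') (rdmAk k ρ)
      = (rdmAk k ρ' * mlog (rdmAk k ρ')).trace
        + (βAk k : ℂ) * (rdmAk k ρ' * HAk k).trace - (cA k : ℂ) := fun k => by
    rw [relEnt, hcA k, trace_mul_affine _ _ _ _ (htrAk' k)]
    ring
  have hVA : ∀ k, vN (rdmAk k ρ)
      = (βAk k : ℂ) * (rdmAk k ρ * HAk k).trace - (cA k : ℂ) := fun k => by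
    rw [vN, hcA k, trace_mul_affine _ _ _ _ (htrAk k)]
    ring
  have hRB : relEnt (rdmB ρ') (rdmB ρ)
      = (rdmB ρ' * mlog (rdmB ρ')).trace + (βB : ℂ) * (rdmB ρ' * HB).trace - (cB : ℂ) := by
    rw [relEnt, hcB, trace_mul_affine _ _ _ _ htrB']
    ring
  have hVB : vN (rdmB ρ) = (βB : ℂ) * (rdmB ρ * HB).trace - (cB : ℂ) := by
    rw [vN, hcB, trace_mul_affine _ _ _ _ htrB]
    ring
  have hVB' : vN (rdmB ρ') = -(rdmB ρ' * mlog (rdmB ρ')).trace := rfl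
  -- sums
  have hsumR : ∑ k, relEnt (rdmAk k ρ') (rdmAk k ρ)
      = (∑ k, (rdmAk k ρ' * mlog (rdmAk k ρ')).trace)
        + (∑ k, (βAk k : ℂ) * (rdmAk k ρ' * HAk k).trace) - (∑ k, (cA k : ℂ)) := by
    rw [← Finset.sum_add_distrib, ← Finset.sum_sub_distrib]
    exact Finset.sum_congr rfl fun k _ => hRA k
  have hsumV : ∑ k, vN (rdmAk k ρ)
      = (∑ k, (βAk k : ℂ) * (rdmAk k ρ * HAk k).trace) - (∑ k, (cA k : ℂ)) := by
    rw [← Finset.sum_sub_distrib]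
    exact Finset.sum_congr rfl fun k _ => hVA k
  have hsumV' : ∑ k, vN (rdmAk k ρ')
      = -∑ k, (rdmAk k ρ' * mlog (rdmAk k ρ')).trace := by
    rw [← Finset.sum_neg_distrib]
    rfl
  have hsumT : ∑ k, ((βA - βAk k : ℝ) : ℂ) * ((ρ' - ρ) * embAk k (HAk k)).trace
      = (βA : ℂ) * (∑ k, ((ρ' - ρ) * embAk k (HAk k)).trace)
        - ((∑ k, (βAk k : ℂ) * (rdmAk k ρ' * HAk k).trace)
           - ∑ k, (βAk k : ℂ) * (rdmAk k ρ * HAk k).trace) := by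
    rw [Finset.mul_sum, ← Finset.sum_sub_distrib, ← Finset.sum_sub_distrib]
    refine Finset.sum_congr rfl fun k _ => ?_
    rw [hEk k]
    push_cast
    ring
  rw [multiMutInfo, multiMutInfo, hsumR, hsumV, hsumV', hRB, hVB, hVB', hvN, hsumT]
  push_cast
  linear_combination (βB : ℂ) * hQB - (βA : ℂ) * hsplit

end Multipartite
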